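/- Let X be the (r,s,t)-element circulant digraph on an even number n of vertices with gcd(n, s) = 1. If there exists an even positive integer d dividing n such that r + t is an odd multiple of d/2, and s = ℓr for some positive integer ℓ ≡ 1 (mod d), then X is singular. -/

import Mathlib

open Complex Finset


/-- If `n` is even, `gcd(n,s) = 1`, `d` is an even positive divisor of `n`
such that `r + t` is an odd multiple of `d/2`, and `s = ℓ·r` for a positive
`ℓ ≡ 1 (mod d)`, then the `(r,s,t)`-element circulant digraph is singular. -/
theorem rst_circulant_singular_case2 (n r s t d ℓ : ℕ) [NeZero n]
    (hsum : r + s + t ≤ n) (hneven : Even n) (hns : Nat.gcd n s = 1)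
    (hd : 0 < d) (hdeven : Even d) (hdn : d ∣ n)
    (hrt : ∃ m : ℕ, Odd m ∧ r + t = m * (d / 2))
    (hℓ : 0 < ℓ) (hsr : s = ℓ * r) (hmod : ℓ % d = 1) :
    (Matrix.of fun i j : ZMod n =>
        if (j - i).val < r ∨ (r + t ≤ (j - i).val ∧ (j - i).val < r + t + s)
        then (1 : ℚ) else 0).det = 0 := by
  classical
  obtain ⟨e, he⟩ := hdeven
  obtain ⟨m, hm, hrtm⟩ := hrt
  have he0 : 0 < e := by omega
  have hd2 : d / 2 = e := by omega
  set ω : ℂ := Complex.exp (2 * Real.pi * Complex.I / d) with hωdef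
  have hdC : (d : ℂ) ≠ 0 := Nat.cast_ne_zero.mpr (by omega)
  have hωd : ω ^ d = 1 := by
    rw [hωdef, ← Complex.exp_nat_mul]
    rw [show (d : ℂ) * (2 * Real.pi * Complex.I / d) = 2 * Real.pi * Complex.I by
      field_simp]
    exact Complex.exp_two_pi_mul_I
  have hωe : ω ^ e = -1 := by
    rw [hωdef, ← Complex.exp_nat_mul]
    rw [show (e : ℂ) * (2 * Real.pi * Complex.I / d) = Real.pi * Complex.I by
      have hde : (d : ℂ) = 2 * e := by
        have : d = 2 * e := by omega
        rw [this]; push_cast; ring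
      have heC : (e : ℂ) ≠ 0 := Nat.cast_ne_zero.mpr (by omega)
      rw [hde]; field_simp]
    exact Complex.exp_pi_mul_I
  have hωn : ω ^ n = 1 := by
    obtain ⟨c, hc⟩ := hdn
    rw [hc, pow_mul, hωd, one_pow]
  have hω1 : ω ≠ 1 := by
    intro h
    rw [h, one_pow] at hωe
    norm_num at hωe
  -- ω power only depends on exponent mod n
  have hpow : ∀ a : ℕ, ω ^ (a % n) = ω ^ a := by
    intro a
    conv_rhs => rw [← Nat.div_add_mod a n]
    rw [pow_add, pow_mul, hωn, one_pow, one_mul]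
  -- the representer vanishes
  have hkey : (ω ^ r - 1) + ω ^ (r + t) * (ω ^ s - 1) = 0 := by
    have h1 : ω ^ (r + t) = -1 := by
      rw [hrtm, hd2, mul_comm, pow_mul, hωe, hm.neg_one_pow]
    have h2 : ω ^ s = ω ^ r := by
      have : ℓ = d * (ℓ / d) + 1 := by have := Nat.div_add_mod ℓ d; omega
      rw [hsr, this]
      rw [show (d * (ℓ / d) + 1) * r = d * (ℓ / d * r) + r by ring]
      rw [pow_add, pow_mul, hωd, one_pow, one_mul]
    rw [h1, h2]; ring
  -- the sum S = 0
  have hS : ∑ k : ZMod n, (if k.val < r ∨ (r + t ≤ k.val ∧ k.val < r + t + s)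
      then ω ^ k.val else 0) = 0 := by
    have hre : ∑ k : ZMod n, (if k.val < r ∨ (r + t ≤ k.val ∧ k.val < r + t + s)
        then ω ^ k.val else 0)
        = ∑ j ∈ range n, (if j < r ∨ (r + t ≤ j ∧ j < r + t + s) then ω ^ j else 0) := by
      refine Finset.sum_nbij' (fun k => k.val) (fun j => (j : ZMod n)) ?_ ?_ ?_ ?_ ?_
      · intro k _; exact mem_range.mpr (ZMod.val_lt k)
      · intro j _; exact mem_univ _
      · intro k _; exact ZMod.natCast_rightInverse k
      · intro j hj; exact ZMod.val_cast_of_lt (mem_range.mp hj)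
      · intro k _
        simp only [ZMod.val_cast_of_lt]
    rw [hre]
    have hsplit : ∀ j ∈ range n,
        (if j < r ∨ (r + t ≤ j ∧ j < r + t + s) then ω ^ j else 0)
        = (if j < r then ω ^ j else 0) + (if r + t ≤ j ∧ j < r + t + s then ω ^ j else 0) := by
      intro j _
      by_cases h1 : j < r <;> by_cases h2 : r + t ≤ j ∧ j < r + t + s <;>
        simp [h1, h2] <;> omega
    rw [Finset.sum_congr rfl hsplit, Finset.sum_add_distrib]
    have e1 : ∑ j ∈ range n, (if j < r then ω ^ j else 0) = ∑ j ∈ range r, ω ^ j := by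
      rw [← Finset.sum_filter]
      congr 1
      ext j
      simp only [mem_filter, mem_range]
      omega
    have e2 : ∑ j ∈ range n, (if r + t ≤ j ∧ j < r + t + s then ω ^ j else 0)
        = ∑ j ∈ Finset.Ico (r + t) (r + t + s), ω ^ j := by
      rw [← Finset.sum_filter]
      congr 1
      ext j
      simp only [mem_filter, mem_range, mem_Ico]
      omega
    rw [e1, e2, Finset.sum_Ico_eq_sum_range]
    simp only [show r + t + s - (r + t) = s from by omega, pow_add]
    rw [← Finset.mul_sum]
    -- now (ω-1) * it = 0 and ω - 1 ≠ 0
    have hω1' : ω - 1 ≠ 0 := sub_ne_zero.mpr hω1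
    apply mul_left_cancel₀ hω1'
    rw [mul_zero]
    linear_combination geom_sum_mul ω r + ω ^ r * ω ^ t * geom_sum_mul ω s + hkey
  -- kernel vector
  set M : Matrix (ZMod n) (ZMod n) ℚ := Matrix.of fun i j : ZMod n =>
      if (j - i).val < r ∨ (r + t ≤ (j - i).val ∧ (j - i).val < r + t + s)
      then (1 : ℚ) else 0 with hM
  have hdet : ((algebraMap ℚ ℂ).mapMatrix M).det = 0 := by
    rw [← Matrix.exists_mulVec_eq_zero_iff]
    refine ⟨fun i => ω ^ i.val, ?_, ?_⟩
    · intro h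
      have := congrFun h 0
      simp [ZMod.val_zero] at this
    · funext i
      show ∑ j, _ = 0
      have hcalc : ∀ j : ZMod n, ((algebraMap ℚ ℂ).mapMatrix M) i j * ω ^ (j : ZMod n).val
          = ω ^ i.val * (if (j - i).val < r ∨ (r + t ≤ (j - i).val ∧ (j - i).val < r + t + s)
            then ω ^ (j - i).val else 0) := by
        intro j
        simp only [RingHom.mapMatrix_apply, Matrix.map_apply, hM, Matrix.of_apply]
        by_cases hc : (j - i).val < r ∨ (r + t ≤ (j - i).val ∧ (j - i).val < r + t + s)
        · simp only [hc, if_true, map_one, one_mul]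
          rw [← pow_add, ← hpow (i.val + (j - i).val)]
          congr 1
          have : (j : ZMod n) = i + (j - i) := by ring
          rw [show ((i.val + (j-i).val) % n) = (i + (j - i)).val from (ZMod.val_add i (j-i)).symm, ← this]
        · simp [hc]
      calc ∑ j : ZMod n, ((algebraMap ℚ ℂ).mapMatrix M) i j * ω ^ (j:ZMod n).val
          = ∑ j : ZMod n, ω ^ i.val * (if (j - i).val < r ∨ (r + t ≤ (j - i).val ∧ (j - i).val < r + t + s)
            then ω ^ (j - i).val else 0) := Finset.sum_congr rfl (fun j _ => hcalc j)
        _ = ω ^ i.val * ∑ j : ZMod n, (if (j - i).val < r ∨ (r + t ≤ (j - i).val ∧ (j - i).val < r + t + s)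
            then ω ^ (j - i).val else 0) := by rw [Finset.mul_sum]
        _ = ω ^ i.val * ∑ k : ZMod n, (if k.val < r ∨ (r + t ≤ k.val ∧ k.val < r + t + s)
            then ω ^ k.val else 0) := by
              congr 1
              exact Fintype.sum_equiv (Equiv.subRight i) _ _ (fun j => rfl)
        _ = 0 := by rw [hS, mul_zero]
  have : (algebraMap ℚ ℂ) M.det = 0 := by
    rw [RingHom.map_det]
    exact hdet
  exact (map_eq_zero_iff _ (algebraMap ℚ ℂ).injective).mp this
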